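/- Let 0 < q < 1, β ∈ ℝ, n, p ∈ ℕ with 1 ≤ p ≤ n. Then the L²(−π,π) norm of the function g(t) = Σ_{k=n−p}^{n−1} Σ_{j=k+1}^∞ q^j cos(jt − βπ/2) equals √π · q^{n−p+1} · √((1 + q² − q^{2p}(2p + 1 − q²(2p−1)))/(1 − q²)³). -/

import Mathlib

open Real Finset MeasureTheory intervalIntegral

lemma aux_int_cos (k : ℤ) (hk : (k:ℝ) ≠ 0) (d : ℝ) :
    ∫ t in (-π)..π, Real.cos ((k:ℝ) * t + d) = 0 := by
  rw [intervalIntegral.integral_comp_mul_add Real.cos hk d]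
  rw [integral_cos]
  have h1 : Real.sin ((k:ℝ) * π + d) = Real.cos ((k:ℝ)*π) * Real.sin d := by
    rw [Real.sin_add, Real.sin_int_mul_pi]; ring
  have h2 : Real.sin ((k:ℝ) * (-π) + d) = Real.cos ((k:ℝ)*π) * Real.sin d := by
    have : (k:ℝ) * (-π ) + d = -((k:ℝ)*π) + d := by ring
    rw [this, Real.sin_add, Real.sin_neg, Real.cos_neg, Real.sin_int_mul_pi]; ring
  rw [h1, h2]; simp

lemma aux_cont_cos (c d : ℝ) : Continuous (fun t : ℝ => Real.cos (c * t + d)) :=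
  Real.continuous_cos.comp ((continuous_const.mul continuous_id').add continuous_const)

lemma aux_orth (φ : ℝ) (a b : ℕ) (ha : 1 ≤ a) (hb : 1 ≤ b) :
    ∫ t in (-π)..π, Real.cos ((a:ℝ) * t - φ) * Real.cos ((b:ℝ) * t - φ)
      = if a = b then π else 0 := by
  have prodid : ∀ X Y : ℝ, Real.cos X * Real.cos Y
      = (Real.cos (X - Y) + Real.cos (X + Y)) / 2 := by
    intro X Y; rw [Real.cos_sub, Real.cos_add]; ring
  have key : ∀ t : ℝ, Real.cos ((a:ℝ) * t - φ) * Real.cos ((b:ℝ) * t - φ)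
      = (Real.cos (((a:ℝ) - b) * t + 0) + Real.cos (((a:ℝ) + b) * t + (-(2*φ)))) / 2 := by
    intro t
    rw [prodid,
      show ((a:ℝ)*t - φ) - ((b:ℝ)*t - φ) = ((a:ℝ) - b) * t + 0 by ring,
      show ((a:ℝ)*t - φ) + ((b:ℝ)*t - φ) = ((a:ℝ) + b) * t + (-(2*φ)) by ring]
  rw [intervalIntegral.integral_congr (g := fun t =>
      (Real.cos (((a:ℝ) - b) * t + 0) + Real.cos (((a:ℝ) + b) * t + (-(2*φ)))) / 2)
      (fun t _ => key t)]
  have hab : ((a:ℝ) + b) = ((a + b : ℤ) : ℝ) := by push_cast; ring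
  have hint2 : ∫ t in (-π)..π, Real.cos (((a:ℝ) + b) * t + (-(2*φ))) = 0 := by
    rw [hab]; exact aux_int_cos _ (by push_cast; positivity) _
  rw [intervalIntegral.integral_div,
    intervalIntegral.integral_add ((aux_cont_cos _ _).intervalIntegrable _ _)
      ((aux_cont_cos _ _).intervalIntegrable _ _), hint2]
  by_cases h : a = b
  · subst h
    have h0 : ∀ t : ℝ, Real.cos (((a:ℝ) - a) * t + 0) = 1 := by
      intro t; norm_num
    rw [intervalIntegral.integral_congr (g := fun _ => (1:ℝ)) (fun t _ => h0 t),
      intervalIntegral.integral_const, if_pos rfl]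
    simp
  · have hab' : ((a:ℝ) - b) = ((a - b : ℤ) : ℝ) := by push_cast; ring
    have hne : (((a:ℤ) - b : ℤ) : ℝ) ≠ 0 := by
      simp only [ne_eq, Int.cast_eq_zero, sub_eq_zero]
      exact_mod_cast fun hh => h (by exact_mod_cast hh)
    have hint1 : ∫ t in (-π)..π, Real.cos (((a:ℝ) - b) * t + 0) = 0 := by
      rw [hab']; exact aux_int_cos _ hne _
    rw [if_neg h, hint1]
    norm_num

-- finite sum identity
lemma aux_fin (r : ℝ) : ∀ p : ℕ,
    (∑ i ∈ range p, ((i:ℝ)+1)^2 * r^i) * (1-r)^3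
      = 1 + r - r^p * (((p:ℝ)+1)^2 - r*(2*(p:ℝ)^2+2*(p:ℝ)-1) + r^2 * (p:ℝ)^2) := by
  intro p
  induction p with
  | zero => norm_num
  | succ p ih =>
    rw [Finset.sum_range_succ, add_mul, ih]
    push_cast
    ring

-- double finite sum counting
lemma aux_double (f : ℕ → ℝ) : ∀ p : ℕ,
    ∑ l ∈ range p, ∑ i ∈ range l, f i = ∑ i ∈ range p, ((p - 1 - i : ℕ):ℝ) * f i := by
  intro p
  induction p with
  | zero => simp
  | succ p ih =>
    rw [Finset.sum_range_succ, ih, Finset.sum_range_succ]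
    have h1 : ((p + 1 - 1 - p : ℕ):ℝ) = 0 := by norm_num
    rw [h1, zero_mul, add_zero]
    rw [← Finset.sum_add_distrib]
    apply Finset.sum_congr rfl
    intro i hi
    rw [Finset.mem_range] at hi
    have : (p + 1 - 1 - i : ℕ) = (p - 1 - i) + 1 := by omega
    rw [this]
    push_cast
    ring

-- min identity
lemma aux_min (p i : ℕ) (hp : 1 ≤ p) : min (i+1) p = p - (p - 1 - i) := by omega

-- the reindexing lemma
lemma aux_reindex (f : ℕ → ℝ) (hf : Summable f) (p : ℕ) (hp : 1 ≤ p) :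
    ∑ l ∈ range p, ∑' j, f (l + j) = ∑' i, ((min (i+1) p : ℕ):ℝ) * f i := by
  have hshift : ∀ l : ℕ, ∑' j, f (l + j) = (∑' i, f i) - ∑ i ∈ range l, f i := by
    intro l
    have := Summable.sum_add_tsum_nat_add (f := f) l hf
    have hc : ∑' j, f (l + j) = ∑' j, f (j + l) := by
      apply tsum_congr; intro j; rw [add_comm]
    rw [hc]; linarith
  simp only [hshift]
  rw [Finset.sum_sub_distrib, Finset.sum_const, aux_double f p]
  -- RHS side
  have hw : ∀ i, ((min (i+1) p : ℕ):ℝ) * f i = (p:ℝ) * f i - ((p - 1 - i : ℕ):ℝ) * f i := by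
    intro i
    rw [aux_min p i hp]
    have h2 : ((p - (p-1-i) : ℕ):ℝ) = (p:ℝ) - ((p-1-i:ℕ):ℝ) := by
      have : (p - 1 - i : ℕ) ≤ p := by omega
      exact Nat.cast_sub this
    rw [h2, sub_mul]
  have hsum2 : Summable (fun i => ((p - 1 - i : ℕ):ℝ) * f i) := by
    apply summable_of_ne_finset_zero (s := range p)
    intro i hi
    rw [Finset.mem_range, not_lt] at hi
    have : (p - 1 - i : ℕ) = 0 := by omega
    rw [this]; simp
  have : ∑' i, ((min (i+1) p : ℕ):ℝ) * f i
      = ∑' i, ((p:ℝ) * f i - ((p - 1 - i : ℕ):ℝ) * f i) := tsum_congr fun i => hw i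
  rw [this, Summable.tsum_sub (hf.mul_left _) hsum2, tsum_mul_left]
  rw [tsum_eq_sum (s := range p) (f := fun i => ((p - 1 - i : ℕ):ℝ) * f i) ?_]
  · rw [Finset.card_range, nsmul_eq_mul]
  · intro i hi
    rw [Finset.mem_range, not_lt] at hi
    have h0 : (p - 1 - i : ℕ) = 0 := by omega
    simp [h0]

lemma aux_S (r : ℝ) (hr0 : 0 ≤ r) (hr1 : r < 1) (p : ℕ) (hp : 1 ≤ p) :
    ∑' i : ℕ, ((min (i+1) p : ℕ):ℝ)^2 * r^i
      = (1 + r - r^p * (2*(p:ℝ) + 1 - r*(2*(p:ℝ) - 1)))/(1-r)^3 := by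
  have hgeo : Summable (fun i : ℕ => r ^ i) := summable_geometric_of_lt_one hr0 hr1
  have hS : Summable (fun i : ℕ => ((min (i+1) p : ℕ):ℝ)^2 * r^i) := by
    apply Summable.of_nonneg_of_le (fun i => by positivity)
      (fun i => ?_) (hgeo.mul_left ((p:ℝ)^2))
    have h1 : ((min (i+1) p : ℕ):ℝ) ≤ (p:ℝ) := by
      exact_mod_cast Nat.min_le_right _ _
    have h2 : (0:ℝ) ≤ ((min (i+1) p : ℕ):ℝ) := by positivity
    have := pow_le_pow_left₀ h2 h1 2
    have hr : (0:ℝ) ≤ r ^ i := by positivity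
    nlinarith
  have hsplit := Summable.sum_add_tsum_nat_add (f := fun i : ℕ => ((min (i+1) p : ℕ):ℝ)^2 * r^i) p hS
  have htail : ∑' i : ℕ, ((min (i+p+1) p : ℕ):ℝ)^2 * r^(i+p)
      = (p:ℝ)^2 * r^p * (1-r)⁻¹ := by
    have : ∀ i : ℕ, ((min (i+p+1) p : ℕ):ℝ)^2 * r^(i+p) = ((p:ℝ)^2 * r^p) * r^i := by
      intro i
      have hm : min (i+p+1) p = p := by omega
      rw [hm, pow_add]; ring
    rw [tsum_congr this, tsum_mul_left, tsum_geometric_of_lt_one hr0 hr1]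
  have hfin : ∑ i ∈ range p, ((min (i+1) p : ℕ):ℝ)^2 * r^i
      = ∑ i ∈ range p, ((i:ℝ)+1)^2 * r^i := by
    apply Finset.sum_congr rfl
    intro i hi
    rw [Finset.mem_range] at hi
    have hm : min (i+1) p = i+1 := by omega
    rw [hm]; push_cast; ring
  have heq : ∑' i : ℕ, ((min (i+1) p : ℕ):ℝ)^2 * r^i
      = ∑ i ∈ range p, ((i:ℝ)+1)^2 * r^i + (p:ℝ)^2 * r^p * (1-r)⁻¹ := by
    rw [← hsplit, hfin, htail]
  rw [heq]
  have hne : (1:ℝ) - r ≠ 0 := by linarith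
  rw [eq_div_iff (by positivity : ((1:ℝ)-r)^3 ≠ 0), add_mul, aux_fin]
  field_simp
  ring

noncomputable def cc (q : ℝ) (p m i : ℕ) : ℝ := ((min (i+1) p : ℕ):ℝ) * q^(m+1+i)

noncomputable def FF (q φ : ℝ) (p m i : ℕ) (t : ℝ) : ℝ :=
  cc q p m i * Real.cos (((m+1+i : ℕ):ℝ) * t - φ)

lemma cc_nonneg (q : ℝ) (hq : 0 ≤ q) (p m i : ℕ) : 0 ≤ cc q p m i := by
  unfold cc; positivity

lemma cc_le (q : ℝ) (hq0 : 0 < q) (hq1 : q < 1) (p m i : ℕ) :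
    cc q p m i ≤ ((p:ℝ) * q^(m+1)) * q^i := by
  unfold cc
  rw [pow_add q (m+1) i]
  have h1 : ((min (i+1) p : ℕ):ℝ) ≤ (p:ℝ) := by exact_mod_cast Nat.min_le_right _ _
  have h2 : (0:ℝ) ≤ q^(m+1) * q^i := by positivity
  calc ((min (i+1) p : ℕ):ℝ) * (q^(m+1) * q^i) ≤ (p:ℝ) * (q^(m+1) * q^i) := by
        apply mul_le_mul_of_nonneg_right h1 h2
    _ = ((p:ℝ) * q^(m+1)) * q^i := by ring

lemma summable_cc (q : ℝ) (hq0 : 0 < q) (hq1 : q < 1) (p m : ℕ) :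
    Summable (cc q p m) := by
  apply Summable.of_nonneg_of_le (cc_nonneg q hq0.le p m) (cc_le q hq0 hq1 p m)
  exact (summable_geometric_of_lt_one hq0.le hq1).mul_left _

lemma abs_FF_le (q φ : ℝ) (hq : 0 ≤ q) (p m i : ℕ) (t : ℝ) :
    |FF q φ p m i t| ≤ cc q p m i := by
  unfold FF
  rw [abs_mul, abs_of_nonneg (cc_nonneg q hq p m i)]
  calc cc q p m i * |Real.cos (((m+1+i : ℕ):ℝ) * t - φ)| ≤ cc q p m i * 1 := by
        apply mul_le_mul_of_nonneg_left (Real.abs_cos_le_one _) (cc_nonneg q hq p m i)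
    _ = cc q p m i := mul_one _

lemma summable_FF (q φ : ℝ) (hq0 : 0 < q) (hq1 : q < 1) (p m : ℕ) (t : ℝ) :
    Summable (fun i => FF q φ p m i t) := by
  apply Summable.of_abs
  exact Summable.of_nonneg_of_le (fun i => abs_nonneg _) (fun i => abs_FF_le q φ hq0.le p m i t)
    (summable_cc q hq0 hq1 p m)

lemma continuous_FF (q φ : ℝ) (p m i : ℕ) : Continuous (FF q φ p m i) := by
  unfold FF
  exact continuous_const.mul (Real.continuous_cos.comp
    ((continuous_const.mul continuous_id').sub continuous_const))

lemma summable_FF_prod (q φ : ℝ) (hq0 : 0 < q) (hq1 : q < 1) (p m : ℕ) (t : ℝ) :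
    Summable (fun z : ℕ × ℕ => FF q φ p m z.1 t * FF q φ p m z.2 t) := by
  apply Summable.of_abs
  apply Summable.of_nonneg_of_le (fun z => abs_nonneg _) (fun z => ?_)
    (Summable.mul_of_nonneg (summable_cc q hq0 hq1 p m) (summable_cc q hq0 hq1 p m)
      (fun i => cc_nonneg q hq0.le p m i) (fun i => cc_nonneg q hq0.le p m i))
  rw [abs_mul]
  exact mul_le_mul (abs_FF_le q φ hq0.le p m z.1 t) (abs_FF_le q φ hq0.le p m z.2 t)
    (abs_nonneg _) (cc_nonneg q hq0.le p m z.1)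

lemma summable_cc_sq (q : ℝ) (hq0 : 0 < q) (hq1 : q < 1) (p m : ℕ) :
    Summable (fun i => π * cc q p m i ^ 2) := by
  apply Summable.mul_left
  apply Summable.of_nonneg_of_le (fun i => sq_nonneg _)
    (fun i => ?_) ((summable_cc q hq0 hq1 p m).mul_left ((p:ℝ) * q^(m+1)))
  have h1 : cc q p m i ≤ (p:ℝ) * q^(m+1) := by
    unfold cc
    have h2 : ((min (i+1) p : ℕ):ℝ) ≤ (p:ℝ) := by exact_mod_cast Nat.min_le_right _ _
    have h3 : q^(m+1+i) ≤ q^(m+1) := by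
      apply pow_le_pow_of_le_one hq0.le hq1.le; omega
    have := mul_le_mul h2 h3 (by positivity) (by positivity)
    simpa using this
  have h0 := cc_nonneg q hq0.le p m i
  nlinarith

lemma aux_main_int (q φ : ℝ) (hq0 : 0 < q) (hq1 : q < 1) (p m : ℕ) (hp : 1 ≤ p) :
    ∫ t in (-π)..π, (∑' i, FF q φ p m i t)^2 = π * ∑' i, (cc q p m i)^2 := by
  have hle : (-π) ≤ π := by linarith [Real.pi_pos]
  -- step 1: pointwise square as double tsum
  have hsq : ∀ t : ℝ, (∑' i, FF q φ p m i t)^2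
      = ∑' z : ℕ × ℕ, FF q φ p m z.1 t * FF q φ p m z.2 t := by
    intro t
    rw [sq]
    exact Summable.tsum_mul_tsum (summable_FF q φ hq0 hq1 p m t) (summable_FF q φ hq0 hq1 p m t)
      (summable_FF_prod q φ hq0 hq1 p m t)
  rw [intervalIntegral.integral_congr (g := fun t =>
      ∑' z : ℕ × ℕ, FF q φ p m z.1 t * FF q φ p m z.2 t) (fun t _ => hsq t)]
  rw [intervalIntegral.integral_of_le hle]
  -- step 2: swap integral and tsum
  have hInt : ∀ z : ℕ × ℕ, Integrable (fun t => FF q φ p m z.1 t * FF q φ p m z.2 t)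
      (volume.restrict (Set.Ioc (-π) π)) := by
    intro z
    exact (((continuous_FF q φ p m z.1).mul (continuous_FF q φ p m z.2)).integrableOn_Ioc)
  have hNorm : Summable (fun z : ℕ × ℕ =>
      ∫ t, ‖FF q φ p m z.1 t * FF q φ p m z.2 t‖ ∂(volume.restrict (Set.Ioc (-π) π))) := by
    apply Summable.of_nonneg_of_le
      (fun z => integral_nonneg (fun t => norm_nonneg _))
      (fun z => ?_)
      ((Summable.mul_of_nonneg (summable_cc q hq0 hq1 p m) (summable_cc q hq0 hq1 p m)
        (fun i => cc_nonneg q hq0.le p m i) (fun i => cc_nonneg q hq0.le p m i)).mul_left (2*π))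
    have hb : ∀ t, ‖FF q φ p m z.1 t * FF q φ p m z.2 t‖ ≤ cc q p m z.1 * cc q p m z.2 := by
      intro t
      rw [Real.norm_eq_abs, abs_mul]
      exact mul_le_mul (abs_FF_le q φ hq0.le p m z.1 t) (abs_FF_le q φ hq0.le p m z.2 t)
        (abs_nonneg _) (cc_nonneg q hq0.le p m z.1)
    calc ∫ t, ‖FF q φ p m z.1 t * FF q φ p m z.2 t‖ ∂(volume.restrict (Set.Ioc (-π) π))
        ≤ ∫ _t, cc q p m z.1 * cc q p m z.2 ∂(volume.restrict (Set.Ioc (-π) π)) := by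
          apply integral_mono (hInt z).norm (integrable_const _) hb
      _ = (2*π) * (cc q p m z.1 * cc q p m z.2) := by
          rw [MeasureTheory.integral_const, measureReal_restrict_apply_univ, Real.volume_real_Ioc,
            max_eq_left (by linarith [Real.pi_pos])]
          rw [smul_eq_mul]; ring
  rw [← integral_tsum_of_summable_integral_norm hInt hNorm]
  -- step 3: compute each integral via orthogonality
  have hterm : ∀ z : ℕ × ℕ, (∫ t, FF q φ p m z.1 t * FF q φ p m z.2 t
        ∂(volume.restrict (Set.Ioc (-π) π)))
      = if z.1 = z.2 then π * cc q p m z.1 ^2 else 0 := by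
    intro z
    rw [← intervalIntegral.integral_of_le hle]
    have : ∀ t : ℝ, FF q φ p m z.1 t * FF q φ p m z.2 t
        = (cc q p m z.1 * cc q p m z.2) *
          (Real.cos (((m+1+z.1 : ℕ):ℝ) * t - φ) * Real.cos (((m+1+z.2 : ℕ):ℝ) * t - φ)) := by
      intro t; unfold FF; ring
    rw [intervalIntegral.integral_congr (fun t _ => this t),
      intervalIntegral.integral_const_mul,
      aux_orth φ (m+1+z.1) (m+1+z.2) (by omega) (by omega)]
    by_cases h : z.1 = z.2
    · rw [if_pos (by omega), if_pos h, h]; ring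
    · rw [if_neg (by omega), if_neg h, mul_zero]
  rw [tsum_congr hterm]
  -- step 4: diagonal sum
  have hinj : Function.Injective (fun i : ℕ => ((i, i) : ℕ × ℕ)) := by
    intro a b h; exact congrArg Prod.fst h
  have hsupp : Function.support (fun z : ℕ × ℕ => if z.1 = z.2 then π * cc q p m z.1 ^2 else 0)
      ⊆ Set.range (fun i : ℕ => ((i, i) : ℕ × ℕ)) := by
    intro z hz
    simp only [Function.mem_support] at hz
    by_cases h : z.1 = z.2
    · exact ⟨z.1, by rw [Prod.ext_iff]; exact ⟨rfl, h⟩⟩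
    · exact absurd (if_neg h) hz
  rw [← Function.Injective.tsum_eq hinj hsupp]
  have hdiag : ∀ c : ℕ, (if ((c,c) : ℕ × ℕ).1 = ((c,c) : ℕ × ℕ).2
      then π * cc q p m c ^2 else 0) = π * cc q p m c ^2 := fun c => if_pos rfl
  rw [tsum_congr hdiag, tsum_mul_left]


/-- For `0 < q < 1`, `β ∈ ℝ`, `1 ≤ p ≤ n`, the `L²(−π,π)` norm of
`g(t) = Σ_{k=n−p}^{n−1} Σ_{j=k+1}^∞ q^j cos(jt − βπ/2)` equals
`√π · q^(n−p+1) · √((1 + q² − q^(2p)(2p + 1 − q²(2p−1)))/(1 − q²)³)`. -/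
theorem stmt_8 (q β : ℝ) (hq0 : 0 < q) (hq1 : q < 1)
    (n p : ℕ) (hp : 1 ≤ p) (hpn : p ≤ n)
    (g : ℝ → ℝ)
    (hg : ∀ t : ℝ, g t = ∑ k ∈ Finset.Ico (n - p) n,
      ∑' j : ℕ, q ^ (k + 1 + j) * Real.cos (((k + 1 + j : ℕ) : ℝ) * t - β * π / 2)) :
    Real.sqrt (∫ t in (-π)..π, (g t) ^ 2)
      = Real.sqrt π * q ^ (n - p + 1) *
        Real.sqrt ((1 + q ^ 2 - q ^ (2 * p) *
          (2 * (p : ℝ) + 1 - q ^ 2 * (2 * (p : ℝ) - 1))) / (1 - q ^ 2) ^ 3) := by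
  set φ := β * π / 2 with hφ
  set m := n - p with hm
  -- rewrite g as a single tsum
  have hsumf : ∀ t : ℝ, Summable (fun i : ℕ => q ^ (m+1+i) * Real.cos (((m+1+i : ℕ):ℝ) * t - φ)) := by
    intro t
    apply Summable.of_abs
    apply Summable.of_nonneg_of_le (fun i => abs_nonneg _) (fun i => ?_)
      ((summable_geometric_of_lt_one hq0.le hq1).mul_left (q^(m+1)))
    rw [abs_mul, abs_of_nonneg (by positivity : (0:ℝ) ≤ q ^ (m+1+i)), pow_add]
    calc q^(m+1) * q^i * |Real.cos (((m+1+i : ℕ):ℝ) * t - φ)|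
        ≤ q^(m+1) * q^i * 1 := by
          apply mul_le_mul_of_nonneg_left (Real.abs_cos_le_one _) (by positivity)
      _ = q^(m+1) * q^i := mul_one _
  have hg' : ∀ t : ℝ, g t = ∑' i : ℕ, FF q φ p m i t := by
    intro t
    rw [hg t, Finset.sum_Ico_eq_sum_range]
    have hnm : n - (n - p) = p := by omega
    rw [hnm]
    have hinner : ∀ l : ℕ, (∑' j : ℕ, q ^ ((n - p) + l + 1 + j)
          * Real.cos ((((n - p) + l + 1 + j : ℕ):ℝ) * t - φ))
        = ∑' j : ℕ, q ^ (m+1+(l+j)) * Real.cos (((m+1+(l+j) : ℕ):ℝ) * t - φ) := by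
      intro l
      apply tsum_congr
      intro j
      have : (n - p) + l + 1 + j = m + 1 + (l + j) := by omega
      rw [this]
    rw [Finset.sum_congr rfl (fun l _ => hinner l)]
    rw [aux_reindex _ (hsumf t) p hp]
    apply tsum_congr
    intro i
    unfold FF cc
    ring
  -- replace the integrand
  have hint : ∫ t in (-π)..π, (g t) ^ 2 = π * ∑' i, (cc q p m i)^2 := by
    rw [intervalIntegral.integral_congr (g := fun t => (∑' i, FF q φ p m i t)^2)
      (fun t _ => by rw [hg' t])]
    exact aux_main_int q φ hq0 hq1 p m hp
  -- compute the sum of squares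
  have hr0 : (0:ℝ) ≤ q^2 := by positivity
  have hr1 : q^2 < 1 := by nlinarith
  have hcsq : ∀ i : ℕ, (cc q p m i)^2
      = ((q^(m+1))^2) * (((min (i+1) p : ℕ):ℝ)^2 * (q^2)^i) := by
    intro i
    unfold cc
    rw [pow_add q (m+1) i]
    ring
  have hsum : ∑' i, (cc q p m i)^2
      = ((q^(m+1))^2) * ((1 + q^2 - (q^2)^p * (2*(p:ℝ) + 1 - q^2*(2*(p:ℝ) - 1)))/(1-q^2)^3) := by
    rw [tsum_congr hcsq, tsum_mul_left, aux_S (q^2) hr0 hr1 p hp]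
  rw [hint, hsum, ← pow_mul q 2 p]
  have hE : (0:ℝ) ≤ (1 + q ^ 2 - q ^ (2 * p) *
      (2 * (p : ℝ) + 1 - q ^ 2 * (2 * (p : ℝ) - 1))) / (1 - q ^ 2) ^ 3 := by
    have := aux_S (q^2) hr0 hr1 p hp
    rw [← pow_mul q 2 p] at this
    rw [← this]
    apply tsum_nonneg
    intro i
    positivity
  rw [show π * ((q^(m+1))^2 * ((1 + q ^ 2 - q ^ (2 * p) *
      (2 * (p : ℝ) + 1 - q ^ 2 * (2 * (p : ℝ) - 1))) / (1 - q ^ 2) ^ 3))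
    = π * (q^(m+1))^2 * ((1 + q ^ 2 - q ^ (2 * p) *
      (2 * (p : ℝ) + 1 - q ^ 2 * (2 * (p : ℝ) - 1))) / (1 - q ^ 2) ^ 3) from by ring]
  rw [Real.sqrt_mul (by positivity) , Real.sqrt_mul (le_of_lt Real.pi_pos),
    Real.sqrt_sq (by positivity : (0:ℝ) ≤ q^(m+1))]
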